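/- Let n ≥ 1 and let Ω ⊆ 𝕆_sⁿ be a real-connected slice-domain with Ω ∩ ℝⁿ = ∅. Then there exists I ∈ 𝕊 such that Ω ⊆ ℂ_Iⁿ. -/

import Mathlib

/-! Octonions via the Cayley–Dickson construction on the quaternions,
the n-dimensional quadratic cone, the slice topology, and slice regularity. -/

noncomputable section
open Quaternion Topology

/-- The octonions, as `ℍ × ℍ` with the (L²) Euclidean norm and
Cayley–Dickson multiplication. -/
abbrev Oct : Type := WithLp 2 (ℍ × ℍ)

namespace Oct

def c1 (p : Oct) : ℍ := (WithLp.equiv 2 (ℍ × ℍ) p).1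
def c2 (p : Oct) : ℍ := (WithLp.equiv 2 (ℍ × ℍ) p).2
def mk (a b : ℍ) : Oct := (WithLp.equiv 2 (ℍ × ℍ)).symm (a, b)

instance : One Oct := ⟨mk 1 0⟩

/-- Cayley–Dickson multiplication. -/
instance : Mul Oct :=
  ⟨fun p q => mk (c1 p * c1 q - star (c2 q) * c2 p) (c2 q * c1 p + c2 p * star (c1 q))⟩

/-- Octonionic conjugation. -/
instance : Star Oct := ⟨fun p => mk (star (c1 p)) (-(c2 p))⟩

/-- Inverse: `p⁻¹ = ‖p‖⁻² • (star p)` (so `0⁻¹ = 0`). -/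
instance : Inv Oct := ⟨fun p => (‖p‖ ^ 2)⁻¹ • star p⟩

/-- The real inner product on `𝕆 ≅ ℝ⁸`, via polarization. -/
def oinner (p q : Oct) : ℝ := (1 / 4) * (‖p + q‖ ^ 2 - ‖p - q‖ ^ 2)

/-- The sphere `𝕊` of imaginary units of the octonions. -/
def Sph : Set Oct := {I | I * I = -1}

/-- The slice complex plane `ℂ_I = ℝ + ℝ I ⊆ 𝕆`. -/
def CI (I : Oct) : Set Oct := {z | ∃ s t : ℝ, z = s • (1 : Oct) + t • I}

end Oct

open Oct

/-- The point `x + y I ∈ ℂ_Iⁿ ⊆ 𝕆ⁿ`. -/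
def aff {n : ℕ} (x y : Fin n → ℝ) (I : Oct) : Fin n → Oct :=
  fun m => x m • (1 : Oct) + y m • I

/-- The embedding `ℝⁿ ⊆ 𝕆ⁿ`. -/
def ofRealn {n : ℕ} (x : Fin n → ℝ) : Fin n → Oct := fun m => x m • (1 : Oct)

/-- The slice `ℂ_Iⁿ ⊆ 𝕆ⁿ`. -/
def slicen (n : ℕ) (I : Oct) : Set (Fin n → Oct) := {q | ∃ x y : Fin n → ℝ, q = aff x y I}

/-- The `n`-dimensional quadratic cone `𝕆ₛⁿ = ⋃_{I ∈ 𝕊} ℂ_Iⁿ`. -/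
def cone (n : ℕ) : Set (Fin n → Oct) := ⋃ I ∈ Sph, slicen n I

/-- The slice topology `τ_s`: a set is open iff its trace on every slice `ℂ_Iⁿ`
is open (expressed via the canonical parametrizations `(x,y) ↦ x + yI`). -/
def τs (n : ℕ) : TopologicalSpace (Fin n → Oct) :=
  ⨆ I : Sph, TopologicalSpace.coinduced
    (fun p : (Fin n → ℝ) × (Fin n → ℝ) => aff p.1 p.2 I.1) inferInstance

/-- A slice-open subset of the quadratic cone. -/
def SliceOpen (n : ℕ) (Ω : Set (Fin n → Oct)) : Prop :=
  Ω ⊆ cone n ∧ IsOpen[τs n] Ω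

/-- A slice-domain: a nonempty slice-connected slice-open subset of the cone. -/
def SliceDomain (n : ℕ) (Ω : Set (Fin n → Oct)) : Prop :=
  SliceOpen n Ω ∧ @IsConnected _ (τs n) Ω

/-- Real-connectedness: `Ω ∩ ℝⁿ` is a (pre)connected subset of `ℝⁿ`. -/
def RealConnected (n : ℕ) (Ω : Set (Fin n → Oct)) : Prop :=
  IsPreconnected {x : Fin n → ℝ | ofRealn x ∈ Ω}

/-- Axially symmetric subsets of the cone. -/
def AxSymm (n : ℕ) (Ω : Set (Fin n → Oct)) : Prop :=
  ∀ (x y : Fin n → ℝ), ∀ I ∈ Sph, ∀ J ∈ Sph, aff x y I ∈ Ω → aff x y J ∈ Ω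

/-- The upper half-space `ℝ²ⁿ₊`: pairs `(x,y)` with `y = 0` or the first
nonzero coordinate of `y` positive. -/
def pos2n (n : ℕ) : Set ((Fin n → ℝ) × (Fin n → ℝ)) :=
  {p | p.2 = 0 ∨ ∃ m : Fin n, 0 < p.2 m ∧ ∀ k : Fin n, k < m → p.2 k = 0}

/-- `Ω_{s₁}`. -/
def s1 {n : ℕ} (Ω : Set (Fin n → Oct)) : Set ((Fin n → ℝ) × (Fin n → ℝ)) :=
  {p | ∃ I ∈ Sph, aff p.1 p.2 I ∈ Ω}

/-- `Ω_{s₂}`. -/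
def s2 {n : ℕ} (Ω : Set (Fin n → Oct)) : Set ((Fin n → ℝ) × (Fin n → ℝ)) :=
  {p | ∃ J ∈ Sph, ∃ K ∈ Sph, J ≠ K ∧ aff p.1 p.2 J ∈ Ω ∧ aff p.1 p.2 K ∈ Ω}

/-- Slice functions: induced on `Ω_{s₂}⁺` by a pair `(F₁, F₂)` via
`f(x + yI) = F₁(x,y) + I·F₂(x,y)`. -/
def IsSliceFun (n : ℕ) (Ω : Set (Fin n → Oct)) (f : (Fin n → Oct) → Oct) : Prop :=
  ∃ F₁ F₂ : (Fin n → ℝ) × (Fin n → ℝ) → Oct,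
    ∀ x y : Fin n → ℝ, (x, y) ∈ s2 Ω ∩ pos2n n → ∀ I ∈ Sph, aff x y I ∈ Ω →
      f (aff x y I) = F₁ (x, y) + I * F₂ (x, y)

/-- Holomorphy of a function of `n` slice variables, read through the
parametrization `(x,y) ↦ x + yI`: continuous partial derivatives (i.e. `C¹`)
and the Cauchy–Riemann equations `(∂/∂xₘ + I ∂/∂yₘ) g = 0` on `U`. -/
def Holo (n : ℕ) (I : Oct) (g : (Fin n → ℝ) × (Fin n → ℝ) → Oct)
    (U : Set ((Fin n → ℝ) × (Fin n → ℝ))) : Prop :=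
  ContDiffOn ℝ 1 g U ∧
  ∀ p ∈ U, ∀ m : Fin n,
    fderiv ℝ g p (Pi.single m 1, 0) + I * fderiv ℝ g p (0, Pi.single m 1) = 0

/-- Weak slice regularity: each restriction `f|_{Ω ∩ ℂ_Iⁿ}` is holomorphic. -/
def WSliceReg (n : ℕ) (Ω : Set (Fin n → Oct)) (f : (Fin n → Oct) → Oct) : Prop :=
  ∀ I ∈ Sph, Holo n I (fun p => f (aff p.1 p.2 I)) {p | aff p.1 p.2 I ∈ Ω}

/-- The complex structure `σ(a,b) = (−b,a)` on `𝕆²`. -/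
def sigma2 : Oct × Oct → Oct × Oct := fun w => (-w.2, w.1)

/-- Holomorphic stem maps: `F : V → 𝕆²` extends to a `C¹` map `G` on an open
neighborhood `U ⊇ V` satisfying `(∂/∂xₘ + σ ∂/∂yₘ) G = 0` on `U`. -/
def StemHolo (n : ℕ) (V : Set ((Fin n → ℝ) × (Fin n → ℝ)))
    (F : (Fin n → ℝ) × (Fin n → ℝ) → Oct × Oct) : Prop :=
  ∃ (U : Set ((Fin n → ℝ) × (Fin n → ℝ))) (G : (Fin n → ℝ) × (Fin n → ℝ) → Oct × Oct),
    IsOpen U ∧ V ⊆ U ∧ Set.EqOn G F V ∧ ContDiffOn ℝ 1 G U ∧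
    ∀ p ∈ U, ∀ m : Fin n,
      fderiv ℝ G p (Pi.single m 1, 0) + sigma2 (fderiv ℝ G p (0, Pi.single m 1)) = 0

/-- Strong slice regularity: `f` is induced by a holomorphic stem map on `Ω_{s₁}`. -/
def SSliceReg (n : ℕ) (Ω : Set (Fin n → Oct)) (f : (Fin n → Oct) → Oct) : Prop :=
  ∃ F : (Fin n → ℝ) × (Fin n → ℝ) → Oct × Oct, StemHolo n (s1 Ω) F ∧
    ∀ x y : Fin n → ℝ, ∀ I ∈ Sph, aff x y I ∈ Ω →
      f (aff x y I) = (F (x, y)).1 + I * (F (x, y)).2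

/-- An s-basis `{I, J, K}` of the octonions. -/
def IsSBasis (I J K : Oct) : Prop :=
  I ∈ Sph ∧ J ∈ Sph ∧ K ∈ Sph ∧
  LinearIndependent ℝ ![(1 : Oct), I, J, I * J, K, J * K, I * K, (I * J) * K] ∧
  Submodule.span ℝ (Set.range ![(1 : Oct), I, J, I * J, K, J * K, I * K, (I * J) * K]) = ⊤

/-- Iterated left multiplication `L_w^β = (L_{w₁})^{β₁} ∘ ⋯ ∘ (L_{wₙ})^{βₙ}`. -/
def Lpow {n : ℕ} (w : Fin n → Oct) (β : Fin n → ℕ) : Oct → Oct :=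
  fun a => (List.finRange n).foldr (fun ℓ c => (fun o => w ℓ * o)^[β ℓ] c) a

/-- The `*`-power `(q − p)^{*α} a = ∑_{β ≤ α} C(α,β) L_q^β (L_{−p}^{α−β} a)`. -/
def starPow {n : ℕ} (p : Fin n → Oct) (α : Fin n → ℕ) (a : Oct) (q : Fin n → Oct) : Oct :=
  ∑ β ∈ Finset.Iic α, (∏ ℓ, (α ℓ).choose (β ℓ)) • Lpow q β (Lpow (-p) (α - β) a)

/-- The `ℓ`-th slice derivative `∂_ℓ f (x + w) = (∂/∂x_ℓ) f (x + w)`. -/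
def sderiv {n : ℕ} (ℓ : Fin n) (f : (Fin n → Oct) → Oct) : (Fin n → Oct) → Oct :=
  fun q => deriv (fun t : ℝ => f (fun m => q m + (if m = ℓ then t else 0) • (1 : Oct))) 0

/-- The iterated slice derivative `f^{(α)} = (∂₁)^{α₁} ⋯ (∂ₙ)^{αₙ} f`. -/
def sderivMulti {n : ℕ} (α : Fin n → ℕ) (f : (Fin n → Oct) → Oct) : (Fin n → Oct) → Oct :=
  (List.finRange n).foldr (fun ℓ g => (sderiv ℓ)^[α ℓ] g) f

/-- The slice-polydisc `P̃(q₀, r)` (relative to `I ∈ 𝕊` with `q₀ ∈ ℂ_Iⁿ`):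
points `x + yJ` with `x ± yI` in the closed polydisc `P_I(q₀, r)`. -/
def polyDisc {n : ℕ} (q₀ : Fin n → Oct) (I : Oct) (r : Fin n → ℝ) : Set (Fin n → Oct) :=
  {q | ∃ x y : Fin n → ℝ, ∃ J ∈ Sph, q = aff x y J ∧
        (∀ ℓ, ‖aff x y I ℓ - q₀ ℓ‖ ≤ r ℓ) ∧ (∀ ℓ, ‖aff x (-y) I ℓ - q₀ ℓ‖ ≤ r ℓ)}


-- ===== Auxiliary lemmas =====

lemma oct_c1_mk (a b : ℍ) : c1 (mk a b) = a := rfl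
lemma oct_c2_mk (a b : ℍ) : c2 (mk a b) = b := rfl
lemma oct_c1_smul (r : ℝ) (p : Oct) : c1 (r • p) = r • c1 p := rfl
lemma oct_c2_smul (r : ℝ) (p : Oct) : c2 (r • p) = r • c2 p := rfl
lemma oct_c1_neg (p : Oct) : c1 (-p) = -(c1 p) := rfl
lemma oct_c2_neg (p : Oct) : c2 (-p) = -(c2 p) := rfl
lemma oct_c1_one : c1 (1 : Oct) = 1 := rfl
lemma oct_c2_one : c2 (1 : Oct) = 0 := rfl
lemma oct_c1_zero : c1 (0 : Oct) = 0 := rfl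

lemma oct_mul_def (p q : Oct) :
    p * q = mk (c1 p * c1 q - star (c2 q) * c2 p) (c2 q * c1 p + c2 p * star (c1 q)) := rfl

def octRho (p : Oct) : ℝ := (c1 p).re

lemma sph_re {I : Oct} (hI : I ∈ Sph) : (c1 I).re = 0 := by
  have h1 : c1 I * c1 I - star (c2 I) * c2 I = -1 := by
    have := congrArg c1 hI
    rw [oct_mul_def, oct_c1_mk] at this
    simpa [oct_c1_neg, oct_c1_one] using this
  have h2 : c2 I * c1 I + c2 I * star (c1 I) = 0 := by
    have := congrArg c2 hI
    rw [oct_mul_def, oct_c2_mk] at this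
    simpa [oct_c2_neg, oct_c2_one] using this
  rw [← mul_add, Quaternion.self_add_star'] at h2
  rcases mul_eq_zero.mp h2 with hb | ha
  · rw [hb] at h1
    simp at h1
    set a := c1 I
    by_contra hre
    have hiI : a.re * a.imI = 0 := by
      have := congrArg QuaternionAlgebra.imI h1
      simp [Quaternion.imI_mul] at this
      linarith [this]
    have hiJ : a.re * a.imJ = 0 := by
      have := congrArg QuaternionAlgebra.imJ h1
      simp [Quaternion.imJ_mul] at this
      linarith [this]
    have hiK : a.re * a.imK = 0 := by
      have := congrArg QuaternionAlgebra.imK h1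
      simp [Quaternion.imK_mul] at this
      linarith [this]
    have hre2 : a.re * a.re - a.imI*a.imI - a.imJ*a.imJ - a.imK*a.imK = -1 := by
      have := congrArg QuaternionAlgebra.re h1
      simpa [Quaternion.re_mul] using this
    have h1' : a.imI = 0 := by rcases mul_eq_zero.mp hiI with h|h; exact absurd h hre; exact h
    have h2' : a.imJ = 0 := by rcases mul_eq_zero.mp hiJ with h|h; exact absurd h hre; exact h
    have h3' : a.imK = 0 := by rcases mul_eq_zero.mp hiK with h|h; exact absurd h hre; exact h
    rw [h1', h2', h3'] at hre2
    nlinarith [sq_nonneg a.re]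
  · have : (2 * (c1 I).re : ℝ) = 0 := Quaternion.coe_injective (by simpa using ha)
    linarith

lemma oct_smul_mul_smul (r s : ℝ) (p q : Oct) : (r • p) * (s • q) = (r * s) • (p * q) := by
  rw [oct_mul_def, oct_mul_def]
  show mk _ _ = (r*s) • (WithLp.equiv 2 (ℍ × ℍ)).symm _
  rw [show ∀ x : ℍ × ℍ, (r*s) • (WithLp.equiv 2 (ℍ × ℍ)).symm x = (WithLp.equiv 2 (ℍ × ℍ)).symm ((r*s) • x) from fun _ => rfl]
  unfold mk
  congr 1
  rw [Prod.smul_mk]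
  congr 1
  · simp only [oct_c1_smul, oct_c2_smul, Quaternion.star_smul, smul_mul_assoc, mul_smul_comm,
      smul_smul, mul_comm s r, smul_sub]
  · simp only [oct_c1_smul, oct_c2_smul, Quaternion.star_smul, smul_mul_assoc, mul_smul_comm,
      smul_smul, mul_comm s r, smul_add]

lemma oct_one_ne_zero : (1 : Oct) ≠ 0 := by
  intro h
  have := congrArg c1 h
  rw [oct_c1_one, oct_c1_zero] at this
  exact one_ne_zero this

lemma sph_ne_zero {I : Oct} (hI : I ∈ Sph) : I ≠ 0 := by
  intro h
  rw [h] at hI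
  have hI' : (0 : Oct) * 0 = -1 := hI
  have h0 : (0 : Oct) * 0 = 0 := by
    rw [oct_mul_def]
    show mk _ _ = (WithLp.equiv 2 (ℍ × ℍ)).symm 0
    unfold mk; congr 1
    simp [oct_c1_zero, show c2 (0:Oct) = 0 from rfl, Prod.ext_iff]
  rw [h0] at hI'
  exact oct_one_ne_zero (by rw [← neg_neg (1:Oct), ← hI', neg_zero])

lemma octRho_add (p q : Oct) : octRho (p + q) = octRho p + octRho q := rfl
lemma octRho_smul (r : ℝ) (p : Oct) : octRho (r • p) = r * octRho p := rfl
lemma octRho_one : octRho (1 : Oct) = 1 := rfl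
lemma octRho_sph {I : Oct} (hI : I ∈ Sph) : octRho I = 0 := sph_re hI

lemma smul_sph_eq {I J : Oct} (hI : I ∈ Sph) (hJ : J ∈ Sph) {y t : ℝ} (hy : y ≠ 0)
    (h : y • J = t • I) : J = I ∨ J = -I := by
  have hJr : J = (t / y) • I := by
    have := congrArg (fun p => (y⁻¹ : ℝ) • p) h
    simp only [smul_smul, inv_mul_cancel₀ hy, one_smul] at this
    rw [this, div_eq_inv_mul]
  set r := t / y
  have hsq : (r * r) • ((-1 : Oct)) = -1 := by
    have hJ' : J * J = -1 := hJ
    have hI' : I * I = -1 := hI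
    rw [hJr, oct_smul_mul_smul, hI'] at hJ'
    exact hJ'
  have hr2 : r * r = 1 := by
    by_contra hne
    have : (r * r - 1) • ((-1 : Oct)) = 0 := by
      rw [sub_smul, one_smul, hsq, sub_self]
    rcases smul_eq_zero.mp this with h' | h'
    · exact hne (by linarith [sub_eq_zero.mp h'])
    · exact oct_one_ne_zero (by rw [← neg_neg (1:Oct), h', neg_zero])
  rcases mul_self_eq_one_iff.mp hr2 with h1 | h1
  · left; rw [hJr, h1, one_smul]
  · right; rw [hJr, h1, neg_smul, one_smul]

lemma coord_force {I J : Oct} (hI : I ∈ Sph) (hJ : J ∈ Sph) {x y s t : ℝ} (hy : y ≠ 0)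
    (h : x • (1:Oct) + y • J = s • (1:Oct) + t • I) : J = I ∨ J = -I := by
  have hx : x = s := by
    have := congrArg octRho h
    simp only [octRho_add, octRho_smul, octRho_one, octRho_sph hI, octRho_sph hJ, mul_one,
      mul_zero, add_zero] at this
    exact this
  have h' : y • J = t • I := by
    rw [hx] at h
    exact add_left_cancel h
  exact smul_sph_eq hI hJ hy h'

lemma coord_real {J : Oct} (hJ : J ∈ Sph) {x y s : ℝ}
    (h : x • (1:Oct) + y • J = s • (1:Oct)) : y = 0 := by
  have hx : x = s := by
    have := congrArg octRho h
    simpa [octRho_add, octRho_smul, octRho_one, octRho_sph hJ] using this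
  rw [hx] at h
  have hy0 : y • J = 0 := by
    have := congrArg (fun p => p - s • (1:Oct)) h
    simpa [add_sub_cancel_left] using this
  rcases smul_eq_zero.mp hy0 with h' | h'
  · exact h'
  · exact absurd h' (sph_ne_zero hJ)

lemma aff_neg' {n : ℕ} (x y : Fin n → ℝ) (I : Oct) : aff x y (-I) = aff x (-y) I := by
  funext m
  simp only [aff, Pi.neg_apply, smul_neg, neg_smul]

lemma aff_zero' {n : ℕ} (x : Fin n → ℝ) (I : Oct) : aff x 0 I = ofRealn x := by
  funext m
  simp [aff, ofRealn]

lemma mem_slicen_self {n : ℕ} (x y : Fin n → ℝ) {I J : Oct} (h : J = I ∨ J = -I) :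
    aff x y J ∈ slicen n I := by
  rcases h with rfl | rfl
  · exact ⟨x, y, rfl⟩
  · exact ⟨x, -y, (aff_neg' x y I).symm ▸ rfl⟩

lemma mem_slicen_iff_of_ne {n : ℕ} {I J : Oct} (hI : I ∈ Sph) (hJ : J ∈ Sph)
    (hne : ¬(J = I ∨ J = -I)) (x y : Fin n → ℝ) :
    aff x y J ∈ slicen n I ↔ y = 0 := by
  constructor
  · rintro ⟨x', y', he⟩
    funext m
    simp only [Pi.zero_apply]
    by_contra hy
    have hc := congrFun he m
    simp only [aff] at hc
    exact hne (coord_force hI hJ hy hc)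
  · rintro rfl
    rw [aff_zero', ← aff_zero' x I]
    exact ⟨x, 0, rfl⟩

lemma mem_range_ofRealn_iff {n : ℕ} {J : Oct} (hJ : J ∈ Sph) (x y : Fin n → ℝ) :
    aff x y J ∈ Set.range (ofRealn (n := n)) ↔ y = 0 := by
  constructor
  · rintro ⟨z, hz⟩
    funext m
    simp only [Pi.zero_apply]
    have hc := congrFun hz.symm m
    simp only [aff, ofRealn] at hc
    exact coord_real hJ hc
  · rintro rfl
    exact ⟨x, (aff_zero' x J).symm⟩

lemma isOpen_τs_iff {n : ℕ} (s : Set (Fin n → Oct)) :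
    IsOpen[τs n] s ↔
      ∀ J : Sph, IsOpen ((fun p : (Fin n → ℝ) × (Fin n → ℝ) => aff p.1 p.2 J.1) ⁻¹' s) := by
  rw [τs, isOpen_iSup_iff]
  simp only [isOpen_coinduced]

/-- A real-connected slice-domain missing `ℝⁿ` is contained in
a single slice `ℂ_Iⁿ`. -/
theorem sliceDomain_subset_slice_of_real_empty (n : ℕ) (hn : 1 ≤ n)
    (Ω : Set (Fin n → Oct)) (hΩ : SliceDomain n Ω) (hrc : RealConnected n Ω)
    (hR : {x : Fin n → ℝ | ofRealn x ∈ Ω} = ∅) :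
    ∃ I ∈ Sph, Ω ⊆ slicen n I := by
  obtain ⟨⟨hsub, hopen⟩, ⟨q₀, hq₀⟩, hconn⟩ := hΩ
  have hq₀c := hsub hq₀
  simp only [cone, Set.mem_iUnion] at hq₀c
  obtain ⟨I, hI, hq₀I⟩ := hq₀c
  refine ⟨I, hI, ?_⟩
  have hΩR : ∀ q ∈ Ω, q ∉ Set.range (ofRealn (n := n)) := by
    rintro q hq ⟨z, rfl⟩
    have hz : z ∈ {x : Fin n → ℝ | ofRealn x ∈ Ω} := hq
    rw [hR] at hz
    exact hz
  set U : Set (Fin n → Oct) := slicen n I \ Set.range (ofRealn (n := n)) with hU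
  set V : Set (Fin n → Oct) := (slicen n I)ᶜ with hV
  have hsnd : IsOpen {p : (Fin n → ℝ) × (Fin n → ℝ) | p.2 ≠ 0} := by
    have hcl : IsClosed {p : (Fin n → ℝ) × (Fin n → ℝ) | p.2 = 0} :=
      isClosed_eq continuous_snd continuous_const
    have := hcl.isOpen_compl
    convert this using 1
    ext p; simp
  have hUopen : IsOpen[τs n] U := by
    rw [isOpen_τs_iff]
    intro J
    by_cases hJI : J.1 = I ∨ J.1 = -I
    · have he : (fun p : (Fin n → ℝ) × (Fin n → ℝ) => aff p.1 p.2 J.1) ⁻¹' U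
          = {p | p.2 ≠ 0} := by
        ext p
        simp only [Set.mem_preimage, hU, Set.mem_diff, Set.mem_setOf_eq]
        constructor
        · rintro ⟨-, hnr⟩ h0
          exact hnr ((mem_range_ofRealn_iff J.2 p.1 p.2).mpr h0)
        · intro h0
          exact ⟨mem_slicen_self _ _ hJI,
            fun hr => h0 ((mem_range_ofRealn_iff J.2 _ _).mp hr)⟩
      rw [he]
      exact hsnd
    · have he : (fun p : (Fin n → ℝ) × (Fin n → ℝ) => aff p.1 p.2 J.1) ⁻¹' U = ∅ := by
        ext p
        simp only [Set.mem_preimage, Set.mem_empty_iff_false, iff_false, hU, Set.mem_diff,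
          not_and, not_not]
        intro hmem
        exact (mem_range_ofRealn_iff J.2 _ _).mpr
          ((mem_slicen_iff_of_ne hI J.2 hJI p.1 p.2).mp hmem)
      rw [he]
      exact isOpen_empty
  have hVopen : IsOpen[τs n] V := by
    rw [isOpen_τs_iff]
    intro J
    by_cases hJI : J.1 = I ∨ J.1 = -I
    · have he : (fun p : (Fin n → ℝ) × (Fin n → ℝ) => aff p.1 p.2 J.1) ⁻¹' V = ∅ := by
        ext p
        simp only [Set.mem_preimage, Set.mem_empty_iff_false, iff_false, hV, Set.mem_compl_iff,
          not_not]
        exact mem_slicen_self _ _ hJI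
      rw [he]
      exact isOpen_empty
    · have he : (fun p : (Fin n → ℝ) × (Fin n → ℝ) => aff p.1 p.2 J.1) ⁻¹' V
          = {p | p.2 ≠ 0} := by
        ext p
        simp only [Set.mem_preimage, hV, Set.mem_compl_iff, Set.mem_setOf_eq,
          mem_slicen_iff_of_ne hI J.2 hJI p.1 p.2]
      rw [he]
      exact hsnd
  by_contra hcon
  obtain ⟨q, hqΩ, hqns⟩ := Set.not_subset.mp hcon
  have hVne : (Ω ∩ V).Nonempty := ⟨q, hqΩ, hqns⟩
  have hUne : (Ω ∩ U).Nonempty := ⟨q₀, hq₀, hq₀I, hΩR q₀ hq₀⟩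
  have hcover : Ω ⊆ U ∪ V := by
    intro q' hq'
    by_cases h : q' ∈ slicen n I
    · exact Or.inl ⟨h, hΩR q' hq'⟩
    · exact Or.inr h
  obtain ⟨q', -, ⟨hq1, -⟩, hq2⟩ := hconn U V hUopen hVopen hcover hUne hVne
  exact hq2 hq1

end
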